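/- arXiv:2209.06364 — 2 statements merged into one kernel-verified Lean document; each statement's English description precedes it below -/
import Mathlib

section
/- Let G be a simple graph (possibly infinite) and let D be a natural number such that every vertex of G has degree at most D. Then G admits a proper edge colouring with D+1 colours. Consequently, the chromatic index χ'(G) satisfies Δ ≤ χ'(G) ≤ Δ+1, where Δ is the supremum of the vertex degrees of G. -/
open SimpleGraph

namespace VizingProof

variable {V : Type*} [DecidableEq V] {n : ℕ}

/-- proper on a finite edge set -/
def POn (E : Finset (Sym2 V)) (C : Sym2 V → Fin n) : Prop :=
  ∀ e₁ ∈ E, ∀ e₂ ∈ E, e₁ ≠ e₂ → (∃ v, v ∈ e₁ ∧ v ∈ e₂) → C e₁ ≠ C e₂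

/-- colour `c` does not appear at `v` among edges of `E` -/
def FreeAt (E : Finset (Sym2 V)) (C : Sym2 V → Fin n) (v : V) (c : Fin n) : Prop :=
  ∀ e ∈ E, v ∈ e → C e ≠ c

lemma exists_free {D : ℕ} (E : Finset (Sym2 V)) (C : Sym2 V → Fin (D+1)) (v : V)
    (h : (E.filter (fun e => v ∈ e)).card ≤ D) : ∃ c, FreeAt E C v c := by
  classical
  have hcard : ((E.filter (fun e => v ∈ e)).image C).card < Fintype.card (Fin (D+1)) := by
    calc ((E.filter (fun e => v ∈ e)).image C).card ≤ (E.filter (fun e => v ∈ e)).card :=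
          Finset.card_image_le
    _ ≤ D := h
    _ < D + 1 := Nat.lt_succ_self D
    _ = Fintype.card (Fin (D+1)) := by simp
  have : ∃ c, c ∉ (E.filter (fun e => v ∈ e)).image C := by
    by_contra hc
    push_neg at hc
    have heq : (E.filter (fun e => v ∈ e)).image C = Finset.univ := Finset.eq_univ_iff_forall.2 hc
    rw [heq, Finset.card_univ] at hcard
    exact lt_irrefl _ hcard
  obtain ⟨c, hc⟩ := this
  exact ⟨c, fun e he hv hce => hc (Finset.mem_image.2 ⟨e, Finset.mem_filter.2 ⟨he, hv⟩, hce⟩)⟩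

/-- extend a proper colouring of `E.erase e₀` to `E` using a colour free at both ends -/
lemma extend_proper {E : Finset (Sym2 V)} {C : Sym2 V → Fin n} {x y : V} {α : Fin n}
    (hC : POn (E.erase s(x,y)) C) (hx : FreeAt (E.erase s(x,y)) C x α)
    (hy : FreeAt (E.erase s(x,y)) C y α) :
    POn E (fun e => if e = s(x,y) then α else C e) := by
  intro e₁ he₁ e₂ he₂ hne ⟨v, hv₁, hv₂⟩
  by_cases h1 : e₁ = s(x,y) <;> by_cases h2 : e₂ = s(x,y)
  · exact absurd (h1.trans h2.symm) hne
  · simp only [h1, if_pos rfl, if_neg h2]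
    have he₂' : e₂ ∈ E.erase s(x,y) := Finset.mem_erase.2 ⟨h2, he₂⟩
    subst h1
    rcases Sym2.mem_iff.1 hv₁ with rfl | rfl
    · exact fun h => hx e₂ he₂' hv₂ h.symm
    · exact fun h => hy e₂ he₂' hv₂ h.symm
  · simp only [h2, if_pos rfl, if_neg h1]
    have he₁' : e₁ ∈ E.erase s(x,y) := Finset.mem_erase.2 ⟨h1, he₁⟩
    subst h2
    rcases Sym2.mem_iff.1 hv₂ with rfl | rfl
    · exact hx e₁ he₁' hv₁
    · exact hy e₁ he₁' hv₁
  · simp only [if_neg h1, if_neg h2]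
    exact hC e₁ (Finset.mem_erase.2 ⟨h1, he₁⟩) e₂ (Finset.mem_erase.2 ⟨h2, he₂⟩) hne ⟨v, hv₁, hv₂⟩

section Swap

variable (E' : Finset (Sym2 V)) (C : Sym2 V → Fin n) (α β : Fin n)

/-- the graph of edges of `E'` coloured `α` or `β` -/
def abGraph : SimpleGraph V where
  Adj u v := u ≠ v ∧ s(u,v) ∈ E' ∧ (C s(u,v) = α ∨ C s(u,v) = β)
  symm := by
    constructor
    intro u v ⟨h1, h2, h3⟩
    rw [Sym2.eq_swap] at h2 h3
    exact ⟨h1.symm, h2, h3⟩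
  loopless := ⟨fun v h => h.1 rfl⟩

variable (w : V)

open Classical in
/-- Kempe swap of colours `α, β` on the component of `w` -/
noncomputable def swapC : Sym2 V → Fin n := fun e =>
  if e ∈ E' ∧ (C e = α ∨ C e = β) ∧ (∃ u ∈ e, (abGraph E' C α β).Reachable w u) then
    (if C e = α then β else α) else C e

variable {E' C α β w}

lemma swapC_eq_of_not_reachable {v : V} (hv : ¬ (abGraph E' C α β).Reachable w v)
    (hnd : ∀ e ∈ E', ¬ e.IsDiag) {e : Sym2 V} (he : e ∈ E') (hve : v ∈ e) :
    swapC E' C α β w e = C e := by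
  rw [swapC, if_neg]
  rintro ⟨h1, h2, u, hu, h3⟩
  -- u and v are both endpoints of e; if u ≠ v they are adjacent in abGraph
  by_cases huv : u = v
  · exact hv (huv ▸ h3)
  · induction e with
    | _ a b =>
      have hadj : (abGraph E' C α β).Adj u v := by
        rcases Sym2.mem_iff.1 hu with rfl | rfl <;> rcases Sym2.mem_iff.1 hve with rfl | rfl
        · exact absurd rfl huv
        · exact ⟨huv, h1, h2⟩
        · exact ⟨huv, by rwa [Sym2.eq_swap], by rwa [Sym2.eq_swap]⟩
        · exact absurd rfl huv
      exact hv (h3.trans hadj.reachable)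

lemma swapC_proper (hC : POn E' C) (hnd : ∀ e ∈ E', ¬ e.IsDiag) :
    POn E' (swapC E' C α β w) := by
  classical
  intro e₁ he₁ e₂ he₂ hne hshare
  -- helper: if e is swapped and shares vertex v reachable...
  have key : ∀ e₁ ∈ E', ∀ e₂ ∈ E', e₁ ≠ e₂ → (∃ v, v ∈ e₁ ∧ v ∈ e₂) →
      (e₁ ∈ E' ∧ (C e₁ = α ∨ C e₁ = β) ∧ (∃ u ∈ e₁, (abGraph E' C α β).Reachable w u)) →
      ¬ (e₂ ∈ E' ∧ (C e₂ = α ∨ C e₂ = β) ∧ (∃ u ∈ e₂, (abGraph E' C α β).Reachable w u)) →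
      swapC E' C α β w e₁ ≠ swapC E' C α β w e₂ := by
    intro e₁ he₁ e₂ he₂ hne ⟨v, hv₁, hv₂⟩ hs₁ hs₂
    -- v is reachable (via e₁'s swapped endpoint), so e₂ must not be α/β coloured
    have hvreach : (abGraph E' C α β).Reachable w v := by
      obtain ⟨_, hc₁, u, hu, hru⟩ := hs₁
      by_cases huv : u = v
      · exact huv ▸ hru
      · have hadj : (abGraph E' C α β).Adj u v := by
          induction e₁ with
          | _ a b =>
            rcases Sym2.mem_iff.1 hu with rfl | rfl <;> rcases Sym2.mem_iff.1 hv₁ with rfl | rfl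
            · exact absurd rfl huv
            · exact ⟨huv, he₁, hc₁⟩
            · exact ⟨huv, by rwa [Sym2.eq_swap], by rwa [Sym2.eq_swap]⟩
            · exact absurd rfl huv
        exact hru.trans hadj.reachable
    have hc₂ : ¬ (C e₂ = α ∨ C e₂ = β) := by
      intro hc
      exact hs₂ ⟨he₂, hc, v, hv₂, hvreach⟩
    rw [swapC, if_pos hs₁, swapC, if_neg hs₂]
    obtain ⟨_, hc₁, _⟩ := hs₁
    rcases hc₁ with h | h
    · rw [if_pos h]; intro hh; exact hc₂ (Or.inr hh.symm)
    · rcases eq_or_ne (C e₁) α with h' | h'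
      · rw [if_pos h']; intro hh; exact hc₂ (Or.inr hh.symm)
      · rw [if_neg h']; intro hh; exact hc₂ (Or.inl hh.symm)
  by_cases hs₁ : e₁ ∈ E' ∧ (C e₁ = α ∨ C e₁ = β) ∧ (∃ u ∈ e₁, (abGraph E' C α β).Reachable w u) <;>
    by_cases hs₂ : e₂ ∈ E' ∧ (C e₂ = α ∨ C e₂ = β) ∧ (∃ u ∈ e₂, (abGraph E' C α β).Reachable w u)
  · -- both swapped
    rw [swapC, if_pos hs₁, swapC, if_pos hs₂]
    have hCne := hC e₁ he₁ e₂ he₂ hne hshare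
    obtain ⟨_, hc₁, _⟩ := hs₁
    obtain ⟨_, hc₂, _⟩ := hs₂
    rcases hc₁ with h1 | h1 <;> rcases hc₂ with h2 | h2
    · exact absurd (h1.trans h2.symm) hCne
    · have hab : α ≠ β := fun h => hCne (by rw [h1, h2, h])
      rw [if_pos h1, if_neg (by rw [h2]; exact fun hh => hab hh.symm)]
      exact fun hh => hab hh.symm
    · have hab : α ≠ β := fun h => hCne (by rw [h1, h2, h])
      rw [if_neg (by rw [h1]; exact fun hh => hab hh.symm), if_pos h2]
      exact hab
    · exact absurd (h1.trans h2.symm) hCne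
  · exact key e₁ he₁ e₂ he₂ hne hshare hs₁ hs₂
  · exact fun h => key e₂ he₂ e₁ he₁ hne.symm (by obtain ⟨v, h1, h2⟩ := hshare; exact ⟨v, h2, h1⟩) hs₂ hs₁ h.symm
  · rw [swapC, if_neg hs₁, swapC, if_neg hs₂]
    exact hC e₁ he₁ e₂ he₂ hne hshare

lemma swapC_free_of_not_reachable {v : V} (hv : ¬ (abGraph E' C α β).Reachable w v)
    (hnd : ∀ e ∈ E', ¬ e.IsDiag) {γ : Fin n} (hf : FreeAt E' C v γ) :
    FreeAt E' (swapC E' C α β w) v γ := by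
  intro e he hve
  rw [swapC_eq_of_not_reachable hv hnd he hve]
  exact hf e he hve

lemma swapC_free_of_reachable {v : V} (hv : (abGraph E' C α β).Reachable w v)
    (hf : FreeAt E' C v β) : FreeAt E' (swapC E' C α β w) v α := by
  intro e he hve
  rw [swapC]
  by_cases h : e ∈ E' ∧ (C e = α ∨ C e = β) ∧ ∃ u ∈ e, (abGraph E' C α β).Reachable w u
  · rw [if_pos h]
    obtain ⟨_, hc, _⟩ := h
    rcases hc with h1 | h1
    · rw [if_pos h1]
      exact fun hh => hf e he hve (h1.trans hh.symm)
    · exact absurd h1 (hf e he hve)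
  · rw [if_neg h]
    exact fun hh => h ⟨he, Or.inl hh, v, hve, hv⟩

/-- The key claim: if `E` admits no proper colouring, `C` is a proper colouring of
`E` minus the edge `s(x,y)`, `α` is free at `x` and `β` free at `y`, then `x` is
reachable from `y` in the `α/β` graph. -/
lemma reachable_of_no_colouring {E : Finset (Sym2 V)} (hno : ¬ ∃ C : Sym2 V → Fin n, POn E C)
    (hnd : ∀ e ∈ E, ¬ e.IsDiag) {x y : V} (hxy : s(x,y) ∈ E)
    {C : Sym2 V → Fin n} (hC : POn (E.erase s(x,y)) C) {α β : Fin n}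
    (hx : FreeAt (E.erase s(x,y)) C x α) (hy : FreeAt (E.erase s(x,y)) C y β) :
    (abGraph (E.erase s(x,y)) C α β).Reachable y x := by
  by_contra hreach
  have hnd' : ∀ e ∈ E.erase s(x,y), ¬ e.IsDiag := fun e he => hnd e (Finset.mem_erase.1 he).2
  set C' := swapC (E.erase s(x,y)) C α β y with hC'def
  have hC' : POn (E.erase s(x,y)) C' := swapC_proper hC hnd'
  have hx' : FreeAt (E.erase s(x,y)) C' x α :=
    swapC_free_of_not_reachable hreach hnd' hx
  have hy' : FreeAt (E.erase s(x,y)) C' y α :=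
    swapC_free_of_reachable (Reachable.refl y) hy
  exact hno ⟨_, extend_proper hC' hx' hy'⟩

end Swap

section Walks

variable {S T : SimpleGraph V}

/-- If `x` has a unique neighbour `b` in `S` and `S`-edges avoiding `x` are `T`-edges,
then anything reachable from `x` (other than `x`) is `T`-reachable from `b`. -/
lemma reach_avoid {x b : V} (hb : ∀ u, S.Adj x u → u = b)
    (hT : ∀ u v, S.Adj u v → u ≠ x → v ≠ x → T.Adj u v)
    {a : V} (ha : a ≠ x) (hr : S.Reachable x a) : T.Reachable b a := by
  suffices h : ∀ N, ∀ w : S.Walk x a, w.length ≤ N → T.Reachable b a by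
    obtain ⟨w⟩ := hr
    exact h w.length w le_rfl
  intro N
  induction N with
  | zero =>
    intro w hw
    cases w with
    | nil => exact absurd rfl ha
    | cons h' w' => simp at hw
  | succ N ih =>
    intro w hw
    cases w with
    | nil => exact absurd rfl ha
    | @cons _ u _ hadj w' =>
      obtain rfl := hb _ hadj
      by_cases hx : x ∈ w'.support
      · refine ih (w'.dropUntil x hx) ?_
        have h1 := SimpleGraph.Walk.length_dropUntil_le w' hx
        simp only [SimpleGraph.Walk.length_cons] at hw
        omega
      · have hedges : ∀ e ∈ w'.edges, e ∈ T.edgeSet := by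
          intro e he
          induction e with
          | _ p q =>
            have hadj' : S.Adj p q := SimpleGraph.Walk.adj_of_mem_edges w' he
            have hp : p ∈ w'.support := SimpleGraph.Walk.fst_mem_support_of_mem_edges w' he
            have hq : q ∈ w'.support := SimpleGraph.Walk.snd_mem_support_of_mem_edges w' he
            exact (SimpleGraph.mem_edgeSet T).2
              (hT p q hadj' (fun h => hx (h ▸ hp)) (fun h => hx (h ▸ hq)))
        exact ⟨w'.transfer T hedges⟩

lemma last_adj : ∀ {a z : V} (q : T.Walk a z), a ≠ z → ∃ u, T.Adj z u ∧ u ∈ q.support := by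
  intro a z q
  induction q with
  | nil => exact fun h => absurd rfl h
  | @cons a u z h q' ih =>
    intro _
    by_cases huz : u = z
    · subst huz
      exact ⟨a, h.symm, by simp [SimpleGraph.Walk.support_cons]⟩
    · obtain ⟨u', hadj, hmem⟩ := ih huz
      exact ⟨u', hadj, by simp [SimpleGraph.Walk.support_cons, hmem]⟩

lemma walk_support_closed {P : V → Prop} (hcl : ∀ z, P z → ∀ z', T.Adj z z' → P z') :
    ∀ {u v : V} (_ : T.Walk u v), P u → P v := by
  intro u v q
  induction q with
  | nil => exact id
  | cons h q ih => exact fun hu => ih (hcl _ hu _ h)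

lemma endpoint_closed {a b : V} (p : T.Walk a b) (hab : a ≠ b)
    (h1 : ∀ u v, T.Adj a u → T.Adj a v → u = v) {z' : V} (hadj : T.Adj a z') :
    z' ∈ p.support := by
  cases p with
  | nil => exact absurd rfl hab
  | @cons _ u _ h q =>
    rw [h1 z' u hadj h]
    simp [SimpleGraph.Walk.support_cons, SimpleGraph.Walk.start_mem_support]

lemma interior_two_adj {a b z : V} (p : T.Walk a b) (hp : p.IsPath)
    (hz : z ∈ p.support) (hza : z ≠ a) (hzb : z ≠ b) :
    ∃ u v, u ≠ v ∧ T.Adj z u ∧ T.Adj z v ∧ u ∈ p.support ∧ v ∈ p.support := by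
  have hspec := p.take_spec hz
  set q := p.takeUntil z hz with hqdef
  set r := p.dropUntil z hz with hrdef
  have hnodup : (q.support ++ r.support.tail).Nodup := by
    rw [← SimpleGraph.Walk.support_append, hspec]
    exact hp.support_nodup
  have hdisj := (List.nodup_append.1 hnodup).2.2
  -- next vertex: from r
  obtain ⟨nxt, hnxt_adj, hnxt_mem⟩ : ∃ u, T.Adj z u ∧ u ∈ r.support.tail := by
    cases r with
    | nil => exact absurd rfl hzb
    | @cons _ u _ h r' =>
      exact ⟨u, h, by simp [SimpleGraph.Walk.support_cons, SimpleGraph.Walk.start_mem_support]⟩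
  -- previous vertex: from q.reverse
  obtain ⟨prv, hprv_adj, hprv_mem⟩ : ∃ u, T.Adj z u ∧ u ∈ q.support :=
    last_adj q (Ne.symm hza)
  refine ⟨prv, nxt, fun hh => ?_, hprv_adj, hnxt_adj, ?_, ?_⟩
  · exact hdisj prv hprv_mem prv (hh ▸ hnxt_mem) rfl
  · have : q.support ⊆ p.support := by
      conv => rhs; rw [← hspec]
      rw [SimpleGraph.Walk.support_append]
      intro t ht
      exact List.mem_append_left _ ht
    exact this hprv_mem
  · have : r.support.tail ⊆ p.support := by
      conv => rhs; rw [← hspec]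
      rw [SimpleGraph.Walk.support_append]
      intro t ht
      exact List.mem_append_right _ ht
    exact this hnxt_mem

/-- In a graph of max degree ≤ 2, three distinct vertices of degree ≤ 1 cannot all lie
in the same connected component. -/
lemma no_three_ends
    (hdeg2 : ∀ z z₁ z₂ z₃, T.Adj z z₁ → T.Adj z z₂ → T.Adj z z₃ → z₁ = z₂ ∨ z₁ = z₃ ∨ z₂ = z₃)
    {a b c : V} (hab : a ≠ b) (hac : a ≠ c) (hbc : b ≠ c)
    (h1a : ∀ u v, T.Adj a u → T.Adj a v → u = v)
    (h1b : ∀ u v, T.Adj b u → T.Adj b v → u = v)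
    (h1c : ∀ u v, T.Adj c u → T.Adj c v → u = v)
    (hrb : T.Reachable a b) (hrc : T.Reachable a c) : False := by
  obtain ⟨w⟩ := hrb
  obtain ⟨p, hp⟩ : ∃ p : T.Walk a b, p.IsPath := ⟨w.toPath.1, w.toPath.2⟩
  have hclosed : ∀ z ∈ p.support, ∀ z', T.Adj z z' → z' ∈ p.support := by
    intro z hz z' hadj
    by_cases hza : z = a
    · subst hza
      exact endpoint_closed p hab h1a hadj
    by_cases hzb : z = b
    · subst hzb
      have := endpoint_closed p.reverse (Ne.symm hab) h1b hadj
      rwa [SimpleGraph.Walk.support_reverse, List.mem_reverse] at this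
    · obtain ⟨u, v, huv, hu, hv, humem, hvmem⟩ := interior_two_adj p hp hz hza hzb
      rcases hdeg2 z z' u v hadj hu hv with h | h | h
      · exact h ▸ humem
      · exact h ▸ hvmem
      · exact absurd h huv
  have hcsupp : c ∈ p.support := by
    obtain ⟨q⟩ := hrc
    exact walk_support_closed hclosed q p.start_mem_support
  obtain ⟨u, v, huv, hu, hv, _, _⟩ := interior_two_adj p hp hcsupp (Ne.symm hac) (Ne.symm hbc)
  exact huv (h1c u v hu hv)

end Walks

section Fan

variable {E : Finset (Sym2 V)} {x : V} {f : ℕ → V} {C₀ : Sym2 V → Fin n} {K : ℕ}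

/-- A fan at `x`: distinct neighbours `f 0, …, f K` such that the colour of `s(x, f (i+1))`
is free at `f i`, where `s(x, f 0)` is the uncoloured edge. -/
structure IsFan (E : Finset (Sym2 V)) (x : V) (f : ℕ → V) (C₀ : Sym2 V → Fin n) (K : ℕ) :
    Prop where
  adj : ∀ i ≤ K, s(x, f i) ∈ E ∧ x ≠ f i
  inj : ∀ i ≤ K, ∀ l ≤ K, f i = f l → i = l
  free : ∀ i < K, FreeAt (E.erase s(x, f 0)) C₀ (f i) (C₀ s(x, f (i+1)))

/-- the `i`-th shifted colouring -/
def Cs (x : V) (f : ℕ → V) (C₀ : Sym2 V → Fin n) : ℕ → Sym2 V → Fin n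
  | 0 => C₀
  | (i+1) => Function.update (Cs x f C₀ i) s(x, f i) (C₀ s(x, f (i+1)))

lemma Cs_succ (i : ℕ) :
    Cs x f C₀ (i+1) = Function.update (Cs x f C₀ i) s(x, f i) (C₀ s(x, f (i+1))) := rfl

lemma fan_edge_ne (hF : IsFan E x f C₀ K) {i l : ℕ} (hi : i ≤ K) (hl : l ≤ K) (h : i ≠ l) :
    s(x, f i) ≠ s(x, f l) := by
  intro hh
  exact h (hF.inj i hi l hl (Sym2.congr_right.1 hh))

lemma fan_edge_mem_erase0 (hF : IsFan E x f C₀ K) {l : ℕ} (h1 : 1 ≤ l) (hl : l ≤ K) :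
    s(x, f l) ∈ E.erase s(x, f 0) :=
  Finset.mem_erase.2 ⟨fan_edge_ne hF hl (Nat.zero_le K) (by omega), (hF.adj l hl).1⟩

lemma Cs_eq_of_ne {i : ℕ} {e : Sym2 V} (h : ∀ l < i, e ≠ s(x, f l)) :
    Cs x f C₀ i e = C₀ e := by
  induction i with
  | zero => rfl
  | succ i ih =>
    rw [Cs_succ, Function.update_of_ne (h i (Nat.lt_succ_self i))]
    exact ih (fun l hl => h l (by omega))

lemma Cs_eq_of_not_mem {i : ℕ} {e : Sym2 V} (h : x ∉ e) : Cs x f C₀ i e = C₀ e :=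
  Cs_eq_of_ne (fun l _ hh => h (hh ▸ Sym2.mem_mk_left x (f l)))

lemma Cs_fan_lt (hF : IsFan E x f C₀ K) :
    ∀ i ≤ K, ∀ l < i, Cs x f C₀ i s(x, f l) = C₀ s(x, f (l+1)) := by
  intro i
  induction i with
  | zero => omega
  | succ i ih =>
    intro hi l hl
    rw [Cs_succ]
    by_cases hli : l = i
    · subst hli
      rw [Function.update_self]
    · rw [Function.update_of_ne (fan_edge_ne hF (by omega) (by omega) hli)]
      exact ih (by omega) l (by omega)

/-- properness of the shifted colouring -/
lemma Cs_proper (hF : IsFan E x f C₀ K) (hC₀ : POn (E.erase s(x, f 0)) C₀)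
    {i : ℕ} (hi : i ≤ K) : POn (E.erase s(x, f i)) (Cs x f C₀ i) := by
  classical
  -- unshifted edges lie in `E.erase s(x, f 0)` and keep their colour
  have unsh : ∀ e ∈ E.erase s(x, f i), (¬ ∃ l, l < i ∧ e = s(x, f l)) →
      e ∈ E.erase s(x, f 0) ∧ Cs x f C₀ i e = C₀ e := by
    intro e he hns
    push_neg at hns
    refine ⟨Finset.mem_erase.2 ⟨?_, (Finset.mem_erase.1 he).2⟩, Cs_eq_of_ne hns⟩
    rcases Nat.eq_zero_or_pos i with h0 | h0
    · subst h0; exact (Finset.mem_erase.1 he).1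
    · exact hns 0 h0
  -- mixed case helper
  have mixed : ∀ l < i, ∀ e₂ ∈ E.erase s(x, f i), (¬ ∃ l', l' < i ∧ e₂ = s(x, f l')) →
      (∃ v, v ∈ s(x, f l) ∧ v ∈ e₂) →
      Cs x f C₀ i s(x, f l) ≠ Cs x f C₀ i e₂ := by
    intro l hl e₂ he₂ hns ⟨v, hv₁, hv₂⟩
    obtain ⟨he₂', he₂c⟩ := unsh e₂ he₂ hns
    rw [Cs_fan_lt hF i hi l hl, he₂c]
    have hmem : s(x, f (l+1)) ∈ E.erase s(x, f 0) := fan_edge_mem_erase0 hF (by omega) (by omega)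
    have hne2 : e₂ ≠ s(x, f (l+1)) := by
      intro hh
      rcases Nat.lt_or_ge (l+1) i with h' | h'
      · push_neg at hns; exact hns (l+1) h' hh
      · have : l + 1 = i := by omega
        exact (Finset.mem_erase.1 he₂).1 (hh.trans (by rw [this]))
    rcases Sym2.mem_iff.1 hv₁ with h' | h'
    · exact hC₀ s(x, f (l+1)) hmem e₂ he₂' (Ne.symm hne2) ⟨x, Sym2.mem_mk_left _ _, h' ▸ hv₂⟩
    · exact fun hh => hF.free l (by omega) e₂ he₂' (h' ▸ hv₂) hh.symm
  intro e₁ he₁ e₂ he₂ hne hshare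
  by_cases hs₁ : ∃ l, l < i ∧ e₁ = s(x, f l) <;> by_cases hs₂ : ∃ l, l < i ∧ e₂ = s(x, f l)
  · obtain ⟨l, hl, rfl⟩ := hs₁
    obtain ⟨m, hm, rfl⟩ := hs₂
    have hlm : l ≠ m := fun h => hne (by rw [h])
    rw [Cs_fan_lt hF i hi l hl, Cs_fan_lt hF i hi m hm]
    exact hC₀ _ (fan_edge_mem_erase0 hF (by omega) (by omega))
      _ (fan_edge_mem_erase0 hF (by omega) (by omega))
      (fan_edge_ne hF (by omega) (by omega) (by omega))
      ⟨x, Sym2.mem_mk_left _ _, Sym2.mem_mk_left _ _⟩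
  · obtain ⟨l, hl, rfl⟩ := hs₁
    exact mixed l hl e₂ he₂ hs₂ hshare
  · obtain ⟨l, hl, rfl⟩ := hs₂
    obtain ⟨v, hv₁, hv₂⟩ := hshare
    exact fun hh => mixed l hl e₁ he₁ hs₁ ⟨v, hv₂, hv₁⟩ hh.symm
  · obtain ⟨he₁', he₁c⟩ := unsh e₁ he₁ hs₁
    obtain ⟨he₂', he₂c⟩ := unsh e₂ he₂ hs₂
    rw [he₁c, he₂c]
    exact hC₀ e₁ he₁' e₂ he₂' hne hshare

/-- freeness at `x` is preserved by shifting -/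
lemma Cs_free_x (hF : IsFan E x f C₀ K) {i : ℕ} (hi : i ≤ K) {γ : Fin n}
    (h : FreeAt (E.erase s(x, f 0)) C₀ x γ) :
    FreeAt (E.erase s(x, f i)) (Cs x f C₀ i) x γ := by
  classical
  intro e he hx
  by_cases hs : ∃ l, l < i ∧ e = s(x, f l)
  · obtain ⟨l, hl, rfl⟩ := hs
    rw [Cs_fan_lt hF i hi l hl]
    exact h s(x, f (l+1)) (fan_edge_mem_erase0 hF (by omega) (by omega)) (Sym2.mem_mk_left _ _)
  · push_neg at hs
    rw [Cs_eq_of_ne hs]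
    refine h e (Finset.mem_erase.2 ⟨?_, (Finset.mem_erase.1 he).2⟩) hx
    rcases Nat.eq_zero_or_pos i with h0 | h0
    · subst h0; exact (Finset.mem_erase.1 he).1
    · exact hs 0 h0

/-- freeness at `f i` is preserved by shifting to stage `i` -/
lemma Cs_free_fi (hF : IsFan E x f C₀ K) {i : ℕ} (hi : i ≤ K) {γ : Fin n}
    (h : FreeAt (E.erase s(x, f 0)) C₀ (f i) γ) :
    FreeAt (E.erase s(x, f i)) (Cs x f C₀ i) (f i) γ := by
  intro e he hfi
  have hns : ∀ l < i, e ≠ s(x, f l) := by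
    intro l hl hh
    rcases Sym2.mem_iff.1 (hh ▸ hfi) with h' | h'
    · exact (hF.adj i hi).2 h'.symm
    · exact absurd (hF.inj i hi l (by omega) h') (by omega)
  rw [Cs_eq_of_ne hns]
  refine h e (Finset.mem_erase.2 ⟨?_, (Finset.mem_erase.1 he).2⟩) hfi
  intro hh
  rcases Nat.eq_zero_or_pos i with h0 | h0
  · exact (Finset.mem_erase.1 he).1 (by rw [hh, h0])
  · rcases Sym2.mem_iff.1 (hh ▸ hfi) with h' | h'
    · exact (hF.adj i hi).2 h'.symm
    · exact absurd (hF.inj i hi 0 (Nat.zero_le K) h') (by omega)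

lemma unshifted_mem {i : ℕ} {e : Sym2 V} (he : e ∈ E.erase s(x, f i))
    (h : ∀ l < i, e ≠ s(x, f l)) : e ∈ E.erase s(x, f 0) := by
  refine Finset.mem_erase.2 ⟨?_, (Finset.mem_erase.1 he).2⟩
  rcases Nat.eq_zero_or_pos i with h0 | h0
  · subst h0; exact (Finset.mem_erase.1 he).1
  · exact h 0 h0

lemma C0_inj_at_x (hC₀ : POn (E.erase s(x, f 0)) C₀) {e₁ e₂ : Sym2 V}
    (h₁ : e₁ ∈ E.erase s(x, f 0)) (h₂ : e₂ ∈ E.erase s(x, f 0))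
    (hx₁ : x ∈ e₁) (hx₂ : x ∈ e₂) (hc : C₀ e₁ = C₀ e₂) : e₁ = e₂ := by
  by_contra hne
  exact hC₀ e₁ h₁ e₂ h₂ hne ⟨x, hx₁, hx₂⟩ hc

/-- unique `β`-edge at `x` in the stage-`i` colouring, when `β = C₀ s(x, f (i+1))` -/
lemma Cs_beta_unique_A (hF : IsFan E x f C₀ K) (hC₀ : POn (E.erase s(x, f 0)) C₀)
    {i : ℕ} (hi1 : i + 1 ≤ K) {e : Sym2 V} (he : e ∈ E.erase s(x, f i)) (hx : x ∈ e)
    (hc : Cs x f C₀ i e = C₀ s(x, f (i+1))) : e = s(x, f (i+1)) := by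
  classical
  by_cases hs : ∃ l, l < i ∧ e = s(x, f l)
  · obtain ⟨l, hl, rfl⟩ := hs
    rw [Cs_fan_lt hF i (by omega) l hl] at hc
    have := C0_inj_at_x hC₀ (fan_edge_mem_erase0 hF (by omega) (by omega))
      (fan_edge_mem_erase0 hF (by omega) hi1) (Sym2.mem_mk_left _ _) (Sym2.mem_mk_left _ _) hc
    have := hF.inj (l+1) (by omega) (i+1) (by omega) (Sym2.congr_right.1 this)
    omega
  · push_neg at hs
    rw [Cs_eq_of_ne hs] at hc
    exact C0_inj_at_x hC₀ (unshifted_mem he hs) (fan_edge_mem_erase0 hF (by omega) hi1)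
      hx (Sym2.mem_mk_left _ _) hc

/-- unique `β`-edge at `x` in the stage-`K` colouring, when `β = C₀ s(x, f (i+1))`, `i+1 < K` -/
lemma Cs_beta_unique_B (hF : IsFan E x f C₀ K) (hC₀ : POn (E.erase s(x, f 0)) C₀)
    {i : ℕ} (hi1 : i + 1 < K) {e : Sym2 V} (he : e ∈ E.erase s(x, f K)) (hx : x ∈ e)
    (hc : Cs x f C₀ K e = C₀ s(x, f (i+1))) : e = s(x, f i) := by
  classical
  by_cases hs : ∃ l, l < K ∧ e = s(x, f l)
  · obtain ⟨l, hl, rfl⟩ := hs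
    rw [Cs_fan_lt hF K le_rfl l hl] at hc
    have := C0_inj_at_x hC₀ (fan_edge_mem_erase0 hF (by omega) (by omega))
      (fan_edge_mem_erase0 hF (by omega) (by omega)) (Sym2.mem_mk_left _ _)
      (Sym2.mem_mk_left _ _) hc
    have := hF.inj (l+1) (by omega) (i+1) (by omega) (Sym2.congr_right.1 this)
    have : l = i := by omega
    rw [this]
  · push_neg at hs
    rw [Cs_eq_of_ne hs] at hc
    have := C0_inj_at_x hC₀ (unshifted_mem he hs) (fan_edge_mem_erase0 hF (by omega) (by omega))
      hx (Sym2.mem_mk_left _ _) hc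
    exact absurd this (hs (i+1) hi1)

end Fan

/-- The heart of Vizing's theorem: a proper colouring of `E` minus one edge extends
(after recolouring) to all of `E`. -/
lemma extension {D : ℕ} {E : Finset (Sym2 V)} (hnd : ∀ e ∈ E, ¬ e.IsDiag)
    (hdeg : ∀ v, (E.filter (fun e => v ∈ e)).card ≤ D) {x y : V} (hxyE : s(x,y) ∈ E)
    (hxy : x ≠ y) {C₀ : Sym2 V → Fin (D+1)} (hC₀ : POn (E.erase s(x,y)) C₀) :
    ∃ C : Sym2 V → Fin (D+1), POn E C := by
  classical
  by_contra hno
  -- maximal fan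
  let P : ℕ → Prop := fun k => ∃ f : ℕ → V, f 0 = y ∧ IsFan E x f C₀ k
  have hP0 : P 0 :=
    ⟨fun _ => y, rfl, ⟨fun i _ => ⟨hxyE, hxy⟩, fun i hi l hl _ => by omega,
      fun i hi => absurd hi (by omega)⟩⟩
  have hPle : ∀ k, P k → k + 1 ≤ D := by
    rintro k ⟨f, hf0, hF⟩
    have hsub : (Finset.range (k+1)).image (fun i => s(x, f i)) ⊆ E.filter (fun e => x ∈ e) := by
      intro e he
      obtain ⟨i, hi, rfl⟩ := Finset.mem_image.1 he
      have := Finset.mem_range.1 hi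
      exact Finset.mem_filter.2 ⟨(hF.adj i (by omega)).1, Sym2.mem_mk_left _ _⟩
    have hcard : ((Finset.range (k+1)).image (fun i => s(x, f i))).card = k + 1 := by
      rw [Finset.card_image_of_injOn, Finset.card_range]
      intro i hi l hl hh
      have h1 := Finset.mem_range.1 (Finset.mem_coe.1 hi)
      have h2 := Finset.mem_range.1 (Finset.mem_coe.1 hl)
      exact hF.inj i (by omega) l (by omega) (Sym2.congr_right.1 hh)
    calc k + 1 = _ := hcard.symm
      _ ≤ (E.filter (fun e => x ∈ e)).card := Finset.card_le_card hsub
      _ ≤ D := hdeg x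
  set K := Nat.findGreatest P D with hKdef
  have hPK : P K := Nat.findGreatest_spec (Nat.zero_le D) hP0
  obtain ⟨f, hf0, hF⟩ := hPK
  have hxyE' : s(x, f 0) ∈ E := by rw [hf0]; exact hxyE
  have hC₀' : POn (E.erase s(x, f 0)) C₀ := by rw [hf0]; exact hC₀
  have hfilter : ∀ v, ((E.erase s(x, f 0)).filter (fun e => v ∈ e)).card ≤ D := fun v =>
    le_trans (Finset.card_le_card (Finset.filter_subset_filter _ (Finset.erase_subset _ _))) (hdeg v)
  obtain ⟨α, hα⟩ := exists_free (E.erase s(x, f 0)) C₀ x (hfilter x)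
  obtain ⟨β, hβ⟩ := exists_free (E.erase s(x, f 0)) C₀ (f K) (hfilter (f K))
  by_cases hβx : FreeAt (E.erase s(x, f 0)) C₀ x β
  · -- finish directly: colour s(x, f K) with β
    exact hno ⟨_, extend_proper (Cs_proper hF hC₀' le_rfl)
      (Cs_free_x hF le_rfl hβx) (Cs_free_fi hF le_rfl hβ)⟩
  · -- β occurs on an edge at x
    have hβx' : ∃ e ∈ E.erase s(x, f 0), x ∈ e ∧ C₀ e = β := by
      unfold FreeAt at hβx
      push_neg at hβx
      obtain ⟨e, he, hxe, hce⟩ := hβx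
      exact ⟨e, he, hxe, hce⟩
    obtain ⟨eβ, heβ, hxeβ, hceβ⟩ := hβx'
    set z := Sym2.Mem.other hxeβ with hzdef
    have hzspec : s(x, z) = eβ := Sym2.other_spec hxeβ
    have hxz : x ≠ z := by
      intro hh
      exact hnd eβ (Finset.mem_erase.1 heβ).2 (by rw [← hzspec, ← hh]; exact rfl)
    by_cases hzfan : ∃ j, j ≤ K ∧ f j = z
    · -- z = f j with 1 ≤ j < K; derive final contradiction
      obtain ⟨j, hjK, hjz⟩ := hzfan
      have hj0 : j ≠ 0 := by
        intro hh
        apply (Finset.mem_erase.1 heβ).1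
        rw [← hzspec, ← hjz, hh]
      have hjKne : j ≠ K := by
        intro hh
        apply hβ eβ heβ (by rw [← hzspec, ← hjz, hh]; exact Sym2.mem_mk_right _ _) hceβ
      obtain ⟨i, rfl⟩ : ∃ i, j = i + 1 := ⟨j - 1, by omega⟩
      have hiK : i + 1 < K := by omega
      have hβeq : β = C₀ s(x, f (i+1)) := by rw [← hceβ, ← hzspec, hjz]
      -- freeness of β at f i (fan property)
      have hfree_i : FreeAt (E.erase s(x, f 0)) C₀ (f i) β := by
        rw [hβeq]; exact hF.free i (by omega)
      -- claims: x is reachable in the α/β graphs of stages i and K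
      have hreachK := reachable_of_no_colouring hno hnd (hF.adj K le_rfl).1
        (Cs_proper hF hC₀' le_rfl) (Cs_free_x hF le_rfl hα) (Cs_free_fi hF le_rfl hβ)
      have hreachI := reachable_of_no_colouring hno hnd (hF.adj i (by omega)).1
        (Cs_proper hF hC₀' (by omega : i ≤ K)) (Cs_free_x hF (by omega : i ≤ K) hα)
        (Cs_free_fi hF (by omega : i ≤ K) hfree_i)
      -- the common α/β graph away from x
      let T : SimpleGraph V := {
        Adj := fun u v => u ≠ v ∧ x ≠ u ∧ x ≠ v ∧ s(u,v) ∈ E ∧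
          (C₀ s(u,v) = α ∨ C₀ s(u,v) = β)
        symm := by
          constructor
          intro u v ⟨h1, h2, h3, h4, h5⟩
          rw [Sym2.eq_swap] at h4 h5
          exact ⟨h1.symm, h3, h2, h4, h5⟩
        loopless := ⟨fun v h => h.1 rfl⟩ }
      have hTadjE : ∀ {u v : V}, T.Adj u v → s(u,v) ∈ E.erase s(x, f 0) := by
        intro u v ⟨h1, h2, h3, h4, _⟩
        refine Finset.mem_erase.2 ⟨?_, h4⟩
        intro hh
        rcases Sym2.mem_iff.1 (hh ▸ Sym2.mem_mk_left u v) with h' | h'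
        · exact h2 h'.symm
        · -- u = f 0 ; also v must be x
          rcases Sym2.mem_iff.1 (hh ▸ Sym2.mem_mk_right u v) with h'' | h''
          · exact h3 h''.symm
          · exact h1 (h'.trans h''.symm)
      have hTinj : ∀ z₀ z₁ z₂, T.Adj z₀ z₁ → T.Adj z₀ z₂ → C₀ s(z₀,z₁) = C₀ s(z₀,z₂) → z₁ = z₂ := by
        intro z₀ z₁ z₂ h1 h2 hc
        by_contra hne
        exact hC₀' _ (hTadjE h1) _ (hTadjE h2)
          (fun hh => hne (Sym2.congr_right.1 hh)) ⟨z₀, Sym2.mem_mk_left _ _, Sym2.mem_mk_left _ _⟩ hc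
      have hdeg2 : ∀ z₀ z₁ z₂ z₃, T.Adj z₀ z₁ → T.Adj z₀ z₂ → T.Adj z₀ z₃ →
          z₁ = z₂ ∨ z₁ = z₃ ∨ z₂ = z₃ := by
        intro z₀ z₁ z₂ z₃ h1 h2 h3
        rcases h1.2.2.2.2 with hc1 | hc1 <;> rcases h2.2.2.2.2 with hc2 | hc2 <;>
          rcases h3.2.2.2.2 with hc3 | hc3
        · exact Or.inl (hTinj _ _ _ h1 h2 (hc1.trans hc2.symm))
        · exact Or.inl (hTinj _ _ _ h1 h2 (hc1.trans hc2.symm))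
        · exact Or.inr (Or.inl (hTinj _ _ _ h1 h3 (hc1.trans hc3.symm)))
        · exact Or.inr (Or.inr (hTinj _ _ _ h2 h3 (hc2.trans hc3.symm)))
        · exact Or.inr (Or.inr (hTinj _ _ _ h2 h3 (hc2.trans hc3.symm)))
        · exact Or.inr (Or.inl (hTinj _ _ _ h1 h3 (hc1.trans hc3.symm)))
        · exact Or.inl (hTinj _ _ _ h1 h2 (hc1.trans hc2.symm))
        · exact Or.inl (hTinj _ _ _ h1 h2 (hc1.trans hc2.symm))
      -- degree-one facts
      have honefree : ∀ w : V, x ≠ w → FreeAt (E.erase s(x, f 0)) C₀ w β →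
          ∀ u v, T.Adj w u → T.Adj w v → u = v := by
        intro w hxw hwfree u v h1 h2
        have hc1 : C₀ s(w,u) = α := by
          rcases h1.2.2.2.2 with h | h
          · exact h
          · exact absurd h (hwfree _ (hTadjE h1) (Sym2.mem_mk_left _ _))
        have hc2 : C₀ s(w,v) = α := by
          rcases h2.2.2.2.2 with h | h
          · exact h
          · exact absurd h (hwfree _ (hTadjE h2) (Sym2.mem_mk_left _ _))
        exact hTinj _ _ _ h1 h2 (hc1.trans hc2.symm)
      have h1K : ∀ u v, T.Adj (f K) u → T.Adj (f K) v → u = v :=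
        honefree _ (hF.adj K le_rfl).2 hβ
      have h1i : ∀ u v, T.Adj (f i) u → T.Adj (f i) v → u = v :=
        honefree _ (hF.adj i (by omega)).2 hfree_i
      have h1j : ∀ u v, T.Adj (f (i+1)) u → T.Adj (f (i+1)) v → u = v := by
        intro u v h1 h2
        have key : ∀ w, T.Adj (f (i+1)) w → C₀ s(f (i+1), w) = α := by
          intro w hw
          rcases hw.2.2.2.2 with h | h
          · exact h
          · exfalso
            have hne : s(f (i+1), w) ≠ s(x, f (i+1)) := by
              intro hh
              have hx' : x ∈ s(f (i+1), w) := by rw [hh]; exact Sym2.mem_mk_left _ _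
              rcases Sym2.mem_iff.1 hx' with h' | h'
              · exact hw.2.1 h'
              · exact hw.2.2.1 h'
            exact hC₀' _ (hTadjE hw) _ (fan_edge_mem_erase0 hF (by omega) (by omega)) hne
              ⟨f (i+1), Sym2.mem_mk_left _ _, Sym2.mem_mk_right _ _⟩ (h.trans hβeq)
        exact hTinj _ _ _ h1 h2 ((key u h1).trans (key v h2).symm)
      -- unique neighbour of x in the stage graphs
      have hbK : ∀ u, (abGraph (E.erase s(x, f K)) (Cs x f C₀ K) α β).Adj x u → u = f i := by
        intro u hu
        obtain ⟨hne, hmem, hcol⟩ := hu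
        have hcβ : Cs x f C₀ K s(x,u) = β := by
          rcases hcol with h | h
          · exact absurd h (Cs_free_x hF le_rfl hα s(x,u) hmem (Sym2.mem_mk_left _ _))
          · exact h
        exact Sym2.congr_right.1
          (Cs_beta_unique_B hF hC₀' hiK hmem (Sym2.mem_mk_left _ _) (hcβ.trans hβeq))
      have hbI : ∀ u, (abGraph (E.erase s(x, f i)) (Cs x f C₀ i) α β).Adj x u → u = f (i+1) := by
        intro u hu
        obtain ⟨hne, hmem, hcol⟩ := hu
        have hcβ : Cs x f C₀ i s(x,u) = β := by
          rcases hcol with h | h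
          · exact absurd h (Cs_free_x hF (by omega : i ≤ K) hα s(x,u) hmem (Sym2.mem_mk_left _ _))
          · exact h
        exact Sym2.congr_right.1
          (Cs_beta_unique_A hF hC₀' (by omega : i + 1 ≤ K) hmem (Sym2.mem_mk_left _ _)
            (hcβ.trans hβeq))
      have hTK : ∀ u v, (abGraph (E.erase s(x, f K)) (Cs x f C₀ K) α β).Adj u v →
          u ≠ x → v ≠ x → T.Adj u v := by
        intro u v h hux hvx
        obtain ⟨h1, h2, h3⟩ := h
        have hxmem : x ∉ s(u,v) := by
          intro hh
          rcases Sym2.mem_iff.1 hh with h' | h'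
          · exact hux h'.symm
          · exact hvx h'.symm
        rw [Cs_eq_of_not_mem hxmem] at h3
        exact ⟨h1, Ne.symm hux, Ne.symm hvx, Finset.mem_of_mem_erase h2, h3⟩
      have hTI : ∀ u v, (abGraph (E.erase s(x, f i)) (Cs x f C₀ i) α β).Adj u v →
          u ≠ x → v ≠ x → T.Adj u v := by
        intro u v h hux hvx
        obtain ⟨h1, h2, h3⟩ := h
        have hxmem : x ∉ s(u,v) := by
          intro hh
          rcases Sym2.mem_iff.1 hh with h' | h'
          · exact hux h'.symm
          · exact hvx h'.symm
        rw [Cs_eq_of_not_mem hxmem] at h3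
        exact ⟨h1, Ne.symm hux, Ne.symm hvx, Finset.mem_of_mem_erase h2, h3⟩
      have hrb : T.Reachable (f i) (f K) :=
        reach_avoid hbK hTK (Ne.symm (hF.adj K le_rfl).2) hreachK.symm
      have hrc : T.Reachable (f (i+1)) (f i) :=
        reach_avoid hbI hTI (Ne.symm (hF.adj i (by omega : i ≤ K)).2) hreachI.symm
      have d1 : f i ≠ f (i+1) := fun h => by
        have := hF.inj i (by omega) (i+1) (by omega) h; omega
      have d2 : f i ≠ f K := fun h => by
        have := hF.inj i (by omega) K le_rfl h; omega
      have d3 : f (i+1) ≠ f K := fun h => by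
        have := hF.inj (i+1) (by omega) K le_rfl h; omega
      exact no_three_ends hdeg2 d1 d2 d3 h1i h1j h1K hrc.symm hrb
    · -- z not in the fan: extend the fan, contradicting maximality
      have hPK1 : P (K+1) := by
        refine ⟨Function.update f (K+1) z, ?_, ?_, ?_, ?_⟩
        · rw [Function.update_of_ne (by omega : (0:ℕ) ≠ K+1)]
          exact hf0
        · intro l hl
          by_cases h : l = K + 1
          · subst h
            rw [Function.update_self]
            exact ⟨by rw [hzspec]; exact (Finset.mem_erase.1 heβ).2, hxz⟩
          · rw [Function.update_of_ne h]
            exact hF.adj l (by omega)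
        · intro l hl m hm hh
          by_cases h : l = K + 1 <;> by_cases h' : m = K + 1
          · omega
          · subst h
            rw [Function.update_self, Function.update_of_ne h'] at hh
            exact absurd ⟨m, by omega, hh.symm⟩ hzfan
          · subst h'
            rw [Function.update_self, Function.update_of_ne h] at hh
            exact absurd ⟨l, by omega, hh⟩ hzfan
          · rw [Function.update_of_ne h, Function.update_of_ne h'] at hh
            exact hF.inj l (by omega) m (by omega) hh
        · intro l hl
          rw [Function.update_of_ne (by omega : (0:ℕ) ≠ K+1)]
          by_cases h : l = K
          · subst h
            rw [Function.update_self, Function.update_of_ne (by omega : K ≠ K+1)]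
            rw [hzspec, hceβ]
            exact hβ
          · rw [Function.update_of_ne (by omega : l + 1 ≠ K+1),
              Function.update_of_ne (by omega : l ≠ K+1)]
            exact hF.free l (by omega)
      have hbound := hPle (K+1) hPK1
      exact Nat.findGreatest_is_greatest (Nat.lt_succ_self K) (by omega) hPK1

/-- Vizing's theorem for finite edge sets. -/
theorem finite_vizing {D : ℕ} (E : Finset (Sym2 V)) (hnd : ∀ e ∈ E, ¬ e.IsDiag)
    (hdeg : ∀ v, (E.filter (fun e => v ∈ e)).card ≤ D) :
    ∃ C : Sym2 V → Fin (D+1), POn E C := by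
  classical
  suffices H : ∀ (N : ℕ) (E : Finset (Sym2 V)), E.card ≤ N → (∀ e ∈ E, ¬ e.IsDiag) →
      (∀ v, (E.filter (fun e => v ∈ e)).card ≤ D) → ∃ C : Sym2 V → Fin (D+1), POn E C by
    exact H E.card E le_rfl hnd hdeg
  intro N
  induction N with
  | zero =>
    intro E hcard _ _
    have : E = ∅ := Finset.card_eq_zero.1 (Nat.le_zero.1 hcard)
    subst this
    exact ⟨fun _ => ⟨0, Nat.succ_pos D⟩, fun e he => absurd he (Finset.notMem_empty e)⟩
  | succ N ih =>
    intro E hcard hnd hdeg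
    rcases E.eq_empty_or_nonempty with rfl | ⟨e, he⟩
    · exact ⟨fun _ => ⟨0, Nat.succ_pos D⟩, fun e he => absurd he (Finset.notMem_empty e)⟩
    · obtain ⟨⟨a, b⟩, rfl⟩ := Quot.exists_rep e
      have hab : a ≠ b := fun h => hnd _ he (by rw [show Quot.mk _ (a,b) = s(a,b) from rfl, h]; exact Sym2.mk_isDiag_iff.2 rfl)
      have he' : s(a,b) ∈ E := he
      obtain ⟨C₀, hC₀⟩ := ih (E.erase s(a,b))
        (by have := Finset.card_erase_of_mem he'; omega)
        (fun e h => hnd e (Finset.mem_of_mem_erase h))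
        (fun v => le_trans (Finset.card_le_card
          (Finset.filter_subset_filter _ (Finset.erase_subset _ _))) (hdeg v))
      exact extension hnd hdeg he' hab hC₀

end VizingProof

/-- The line graph used for the compactness argument. -/
private def lineG {V : Type*} (G : SimpleGraph V) : SimpleGraph (Sym2 V) where
  Adj e₁ e₂ := e₁ ≠ e₂ ∧ e₁ ∈ G.edgeSet ∧ e₂ ∈ G.edgeSet ∧ ∃ v, v ∈ e₁ ∧ v ∈ e₂
  symm := by
    constructor
    intro e₁ e₂ ⟨h1, h2, h3, v, h4, h5⟩
    exact ⟨h1.symm, h3, h2, v, h5, h4⟩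
  loopless := ⟨fun e h => h.1 rfl⟩


/-- A proper edge colouring of a simple graph `G` with `n` colours: a map assigning to
each edge one of `n` colours so that distinct edges sharing a vertex get different colours. -/
def SimpleGraph.EdgeColorable {V : Type*} (G : SimpleGraph V) (n : ℕ) : Prop :=
  ∃ C : Sym2 V → Fin n, ∀ e₁ ∈ G.edgeSet, ∀ e₂ ∈ G.edgeSet,
    e₁ ≠ e₂ → (∃ v, v ∈ e₁ ∧ v ∈ e₂) → C e₁ ≠ C e₂

open VizingProof in
/-- Vizing's theorem for (possibly infinite) simple graphs: if every vertex has degree at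
most `D`, then `G` admits a proper edge colouring with `D + 1` colours. -/
theorem edgeColorable_of_degree_le {V : Type*} (G : SimpleGraph V) (D : ℕ)
    (hdeg : ∀ v : V, (G.neighborSet v).encard ≤ D) :
    G.EdgeColorable (D + 1) := by
  classical
  have hmain : ∀ (L' : SimpleGraph.Subgraph (lineG G)), L'.verts.Finite →
      Nonempty (L'.coe →g (⊤ : SimpleGraph (Fin (D+1)))) := by
    intro L' hfin
    set E₀ : Finset (Sym2 V) := (hfin.inter_of_left G.edgeSet).toFinset with hE₀
    have hE₀mem : ∀ {e : Sym2 V}, e ∈ E₀ ↔ e ∈ L'.verts ∧ e ∈ G.edgeSet := by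
      intro e
      rw [hE₀, Set.Finite.mem_toFinset, Set.mem_inter_iff]
    have hnd : ∀ e ∈ E₀, ¬ e.IsDiag := fun e heE =>
      G.not_isDiag_of_mem_edgeSet (hE₀mem.1 heE).2
    have hdeg₀ : ∀ v, (E₀.filter (fun e => v ∈ e)).card ≤ D := by
      intro v
      have h1 : ((E₀.filter (fun e => v ∈ e) : Finset (Sym2 V)) : Set (Sym2 V)).encard ≤
          (G.neighborSet v).encard := by
        apply Set.encard_le_encard_of_injOn
          (f := fun e => if h : v ∈ e then Sym2.Mem.other h else v)
        · intro e hemem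
          obtain ⟨heE₀, hv⟩ := Finset.mem_filter.1 (Finset.mem_coe.1 hemem)
          simp only [dif_pos hv]
          show G.Adj v (Sym2.Mem.other hv)
          rw [← SimpleGraph.mem_edgeSet, Sym2.other_spec hv]
          exact (hE₀mem.1 heE₀).2
        · intro e₁ he₁ e₂ he₂ heq
          obtain ⟨_, hv₁⟩ := Finset.mem_filter.1 (Finset.mem_coe.1 he₁)
          obtain ⟨_, hv₂⟩ := Finset.mem_filter.1 (Finset.mem_coe.1 he₂)
          simp only [dif_pos hv₁, dif_pos hv₂] at heq
          rw [← Sym2.other_spec hv₁, ← Sym2.other_spec hv₂, heq]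
      have h2 : (((E₀.filter (fun e => v ∈ e)).card : ℕ∞)) ≤ (D : ℕ∞) := by
        rw [← Set.encard_coe_eq_coe_finsetCard]
        exact le_trans h1 (hdeg v)
      exact_mod_cast h2
    obtain ⟨C₀, hC₀⟩ := finite_vizing E₀ hnd hdeg₀
    refine ⟨⟨fun e => C₀ e.val, ?_⟩⟩
    intro a b hadj
    rw [SimpleGraph.Subgraph.coe_adj] at hadj
    obtain ⟨h1, h2, h3, hsh⟩ := L'.adj_sub hadj
    simp only [SimpleGraph.top_adj]
    exact hC₀ a.val (hE₀mem.2 ⟨a.2, h2⟩) b.val (hE₀mem.2 ⟨b.2, h3⟩) h1 hsh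
  obtain ⟨g⟩ := SimpleGraph.nonempty_hom_of_forall_finite_subgraph_hom
    (fun L' hfin => Classical.choice (hmain L' hfin))
  refine ⟨g, ?_⟩
  intro e₁ h₁ e₂ h₂ hne hsh
  have hadj : (lineG G).Adj e₁ e₂ := ⟨hne, h₁, h₂, hsh⟩
  have := g.map_adj hadj
  rwa [SimpleGraph.top_adj] at this
end

section
/- Let α = arctan(1/2) and β = arctan(2) (the two non-right interior angles of the right triangle with legs 1 and 2 and hypotenuse √5, so α + β = π/2). Then for all natural numbers a, b, c, d, e, writing n = a + b + c + d + e, we have a·π + b·(4α) + c·(4β) + d·(2α + π/2) + e·(2β + π/2) ≠ (n − 2)·π (as real numbers). In particular, no simple polygon can have all of its interior angles drawn from the list π, 4α, 4β, 2α + π/2, 2β + π/2, since the interior angles of a simple polygon with n vertices sum to (n−2)π. -/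
open Real

lemma pow_two_add_I (n : ℕ) : ∃ A B : ℤ, ((2:ℂ) + Complex.I)^(n+1) = A + B*Complex.I ∧
    (A : ZMod 5) = 2 * 4^n ∧ (B : ZMod 5) = 4^n := by
  induction n with
  | zero => exact ⟨2, 1, by norm_num, by decide, by decide⟩
  | succ n ih =>
    obtain ⟨A, B, h, hA, hB⟩ := ih
    have h5 : (5 : ZMod 5) = 0 := rfl
    refine ⟨2*A - B, A + 2*B, ?_, ?_, ?_⟩
    · rw [pow_succ, h]; push_cast; linear_combination (B:ℂ) * Complex.I_sq
    · push_cast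
      linear_combination 2*hA - hB - (4^n : ZMod 5) * h5
    · push_cast
      linear_combination hA + 2*hB
  
lemma base_id : (Real.sqrt 5 : ℂ) * Complex.exp (Real.arctan (1/2) * Complex.I) =
    2 + Complex.I := by
  have hs : Real.sqrt (1 + (1/2:ℝ)^2) = Real.sqrt 5 / 2 := by
    rw [show (1 + (1/2:ℝ)^2) = 5/4 by norm_num, show (5/4:ℝ) = 5/2^2 by norm_num,
      Real.sqrt_div' 5 (by norm_num), Real.sqrt_sq (by norm_num : (0:ℝ) ≤ 2)]
  have h5 : (0:ℝ) < Real.sqrt 5 := Real.sqrt_pos.mpr (by norm_num)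
  rw [Complex.exp_mul_I, ← Complex.ofReal_cos, ← Complex.ofReal_sin,
    Real.cos_arctan, Real.sin_arctan, hs]
  have hne : (Real.sqrt 5 : ℂ) ≠ 0 := by exact_mod_cast h5.ne'
  push_cast
  field_simp

lemma arctan_half_nat (n : ℕ) (m : ℤ) :
    ((n:ℝ)+1) * Real.arctan (1/2) ≠ (m:ℝ) * Real.pi := by
  intro h
  obtain ⟨A, B, hAB, hA, hB⟩ := pow_two_add_I n
  have h4 : (4 : ZMod 5) ≠ 0 := by decide
  haveI : Fact (Nat.Prime 5) := ⟨by norm_num⟩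
  have hBne : (B : ZMod 5) ≠ 0 := by rw [hB]; exact pow_ne_zero _ h4
  have hB0 : B ≠ 0 := fun h0 => hBne (by simp [h0])
  have h1 : ((2:ℂ)+Complex.I)^(n+1) =
      ((Real.sqrt 5 : ℂ))^(n+1) * Complex.exp (((n:ℂ)+1) * (Real.arctan (1/2) * Complex.I)) := by
    rw [← base_id, mul_pow]
    congr 1
    rw [show ((n:ℂ)+1) = ((n+1 : ℕ) : ℂ) by push_cast; ring, Complex.exp_nat_mul]
  have hc : (((n:ℝ)+1 : ℝ) : ℂ) * (Real.arctan (1/2) : ℂ) = (m:ℂ) * (Real.pi : ℂ) := by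
    exact_mod_cast congrArg Complex.ofReal h
  have h2 : Complex.exp (((n:ℂ)+1) * ((Real.arctan (1/2):ℂ) * Complex.I)) =
      Complex.exp ((m:ℂ) * ((Real.pi:ℂ) * Complex.I)) := by
    congr 1
    push_cast at hc ⊢
    linear_combination Complex.I * hc
  have h3 : Complex.exp ((m:ℂ) * ((Real.pi:ℂ) * Complex.I)) = ((-1:ℝ)^m : ℂ) := by
    rw [Complex.exp_int_mul, Complex.exp_pi_mul_I]; push_cast; ring
  have h4 : ((A:ℂ) + B*Complex.I) = ((Real.sqrt 5 ^ (n+1) * (-1:ℝ)^m : ℝ) : ℂ) := by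
    rw [← hAB, h1, h2, h3]; push_cast; ring
  have him := congrArg Complex.im h4
  simp only [Complex.add_im, Complex.intCast_im, Complex.mul_im, Complex.intCast_re,
    Complex.I_im, Complex.I_re, Complex.ofReal_im, mul_zero, mul_one, zero_add,
    add_zero] at him
  exact hB0 (by exact_mod_cast him)

lemma arctan_half_int (n m : ℤ) (hn : n ≠ 0) :
    (n:ℝ) * Real.arctan (1/2) ≠ (m:ℝ) * Real.pi := by
  have pos : ∀ n m : ℤ, 0 < n → (n:ℝ) * Real.arctan (1/2) ≠ (m:ℝ) * Real.pi := by
    intro n m hn h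
    refine arctan_half_nat (n.toNat - 1) m ?_
    have hcast : ((n.toNat - 1 : ℕ) : ℝ) + 1 = (n:ℝ) := by
      have h1 : 1 ≤ n.toNat := by omega
      rw [Nat.cast_sub h1]
      have : ((n.toNat : ℕ) : ℝ) = (n : ℝ) := by
        exact_mod_cast congrArg (Int.cast : ℤ → ℝ) (Int.toNat_of_nonneg hn.le)
      rw [this]; ring
    rw [hcast]; exact h
  rcases hn.lt_or_gt with hlt | hgt
  · intro h
    refine pos (-n) (-m) (by omega) ?_
    push_cast
    linear_combination -h
  · exact pos n m hgt

/-- With `α = arctan (1/2)` and `β = arctan 2`, no multiset of `n = a + b + c + d + e`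
angles drawn from the list `π, 4α, 4β, 2α + π/2, 2β + π/2` can total `(n - 2)·π`.
Hence no simple polygon has all its interior angles drawn from this list. -/
theorem no_polygon_angles_from_list (a b c d e : ℕ) :
    let α := Real.arctan (1 / 2)
    let β := Real.arctan 2
    (a : ℝ) * Real.pi + (b : ℝ) * (4 * α) + (c : ℝ) * (4 * β) +
        (d : ℝ) * (2 * α + Real.pi / 2) + (e : ℝ) * (2 * β + Real.pi / 2) ≠
      (((a + b + c + d + e : ℕ) : ℝ) - 2) * Real.pi := by
  intro α β h
  have hβ : β = Real.pi/2 - α := by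
    have h2 : Real.arctan (1/2) = Real.pi/2 - Real.arctan 2 := by
      rw [show (1/2:ℝ) = 2⁻¹ by norm_num]
      exact Real.arctan_inv_of_pos (by norm_num)
    show Real.arctan 2 = Real.pi/2 - Real.arctan (1/2)
    rw [h2]; ring
  set k : ℤ := 2*(b:ℤ) - 2*c + d - e with hkdef
  rw [hβ] at h
  have hk : (4*(k:ℝ)) * α = ((k:ℝ) - 4) * Real.pi := by
    rw [hkdef]
    push_cast at h ⊢
    linear_combination 2*h
  by_cases hk0 : k = 0
  · rw [hk0] at hk
    simp at hk
  · refine arctan_half_int (4*k) (k-4) (by omega) ?_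
    push_cast
    have hα : α = Real.arctan (1/2) := rfl
    rw [hα] at hk
    linear_combination hk
end
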